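/- Let (V, Ω) be a symplectic vector space, A ∈ sp(V,Ω), and x ∈ V with Ω(x, Ax) = 1. Let D_x = {v ∈ V : Ω(x, v) = 0 and Ω(Ax, v) = 0}, and suppose j₀ is an endomorphism of D_x with j₀² = −Id which is a compatible complex structure for the restriction of Ω to D_x (i.e. Ω(j₀u, v) + Ω(u, j₀v) = 0 and Ω(u, j₀u) > 0 for u ≠ 0 in D_x). Then there exists a unique compatible complex structure J on (V, Ω) such that Jx = Ax, J(D_x) ⊆ D_x, and J restricts to j₀ on D_x; moreover this J satisfies J(Ax) = −x. (This is the linear-algebraic core of Lemma 6.8, identifying the fibre of the pulled-back twistor fibration over a point of the constraint surface Σ_A.) -/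
import Mathlib

set_option maxHeartbeats 1000000


/-- linear-algebraic core of Lemma 6.8: given `A ∈ sp(V,Ω)`,
`x ∈ V` with `Ω(x,Ax) = 1`, and a compatible complex structure `j₀` on the
symplectic orthogonal `D = ⟨x,Ax⟩^⊥`, there is a unique compatible complex
structure `J` on `(V,Ω)` with `Jx = Ax`, `J(D) ⊆ D` and `J|_D = j₀`; moreover
any such `J` satisfies `J(Ax) = -x`. -/
theorem unique_compatible_extension_on_constraint_surface
    {V : Type*} [AddCommGroup V] [Module ℝ V] [FiniteDimensional ℝ V]
    (Ω : V →ₗ[ℝ] V →ₗ[ℝ] ℝ)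
    (hΩalt : ∀ v : V, Ω v v = 0)
    (hΩnd : ∀ u : V, (∀ v : V, Ω u v = 0) → u = 0)
    (A : V →ₗ[ℝ] V)
    (hA : ∀ u v : V, Ω (A u) v + Ω u (A v) = 0)
    (x : V) (hx : Ω x (A x) = 1)
    (D : Submodule ℝ V)
    (hD : D = LinearMap.ker (Ω x) ⊓ LinearMap.ker (Ω (A x)))
    (j₀ : D →ₗ[ℝ] D)
    (hj₀sq : ∀ v : D, j₀ (j₀ v) = - v)
    (hj₀sp : ∀ u v : D, Ω (j₀ u : V) (v : V) + Ω (u : V) (j₀ v : V) = 0)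
    (hj₀pos : ∀ u : D, u ≠ 0 → 0 < Ω (u : V) (j₀ u : V)) :
    (∃! J : V →ₗ[ℝ] V,
      (∀ u v : V, Ω (J u) v + Ω u (J v) = 0) ∧
      (∀ v : V, J (J v) = - v) ∧
      (∀ u : V, u ≠ 0 → 0 < Ω u (J u)) ∧
      J x = A x ∧
      (∀ v ∈ D, J v ∈ D) ∧
      (∀ v : D, J (v : V) = (j₀ v : V))) ∧
    (∀ J : V →ₗ[ℝ] V,
      ((∀ u v : V, Ω (J u) v + Ω u (J v) = 0) ∧
       (∀ v : V, J (J v) = - v) ∧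
       (∀ u : V, u ≠ 0 → 0 < Ω u (J u)) ∧
       J x = A x ∧
       (∀ v ∈ D, J v ∈ D) ∧
       (∀ v : D, J (v : V) = (j₀ v : V))) →
      J (A x) = - x) := by
  -- skew symmetry
  have hskew : ∀ u v : V, Ω u v = - Ω v u := by
    intro u v
    have h := hΩalt (u + v)
    simp only [map_add, LinearMap.add_apply, hΩalt] at h
    linarith
  have hxx : Ω x x = 0 := hΩalt x
  have hAxx : Ω (A x) x = -1 := by rw [hskew, hx]
  have hAxAx : Ω (A x) (A x) = 0 := hΩalt _
  have hmemD : ∀ v : V, v ∈ D ↔ (Ω x v = 0 ∧ Ω (A x) v = 0) := by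
    intro v; rw [hD]; simp [LinearMap.mem_ker]
  have hDx1 : ∀ p : D, Ω x (p : V) = 0 := fun p => ((hmemD p).1 p.2).1
  have hDx2 : ∀ p : D, Ω (A x) (p : V) = 0 := fun p => ((hmemD p).1 p.2).2
  have hDx3 : ∀ p : D, Ω (p : V) x = 0 := fun p => by rw [hskew, hDx1]; ring
  have hDx4 : ∀ p : D, Ω (p : V) (A x) = 0 := fun p => by rw [hskew, hDx2]; ring
  -- the projection onto D
  set πlin : V →ₗ[ℝ] V :=
    LinearMap.id - ((Ω.flip (A x)).smulRight x) - ((Ω x).smulRight (A x)) with hπlin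
  have hπlinval : ∀ v : V, πlin v = v - Ω v (A x) • x - Ω x v • (A x) := by
    intro v; simp [hπlin]
  have hπmem : ∀ v : V, πlin v ∈ D := by
    intro v
    rw [hmemD, hπlinval]
    constructor
    · simp only [map_sub, map_smul, hxx, hx, smul_eq_mul]
      ring
    · simp only [map_sub, map_smul, hAxx, hAxAx, smul_eq_mul]
      rw [hskew v (A x)]
      ring
  set π : V →ₗ[ℝ] D := πlin.codRestrict D hπmem with hπ
  have hπval : ∀ v : V, ((π v : V)) = v - Ω v (A x) • x - Ω x v • (A x) := by
    intro v; simp [hπ, hπlinval]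
  have hdecomp : ∀ v : V, v = Ω v (A x) • x + Ω x v • (A x) + (π v : V) := by
    intro v; rw [hπval]; abel
  -- the candidate J
  set J : V →ₗ[ℝ] V :=
    ((Ω.flip (A x)).smulRight (A x)) - ((Ω x).smulRight x) + D.subtype ∘ₗ (j₀ ∘ₗ π)
    with hJdef
  have hJval : ∀ v : V, J v = Ω v (A x) • (A x) - Ω x v • x + ((j₀ (π v) : V)) := by
    intro v; simp [hJdef]
  -- values of π on the basic vectors and on D
  have hπx : π x = 0 := by
    apply Subtype.ext
    rw [hπval]
    simp [hx, hxx]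
  have hπAx : π (A x) = 0 := by
    apply Subtype.ext
    rw [hπval]
    simp [hx, hAxAx]
  have hπD : ∀ p : D, π (p : V) = p := by
    intro p
    apply Subtype.ext
    rw [hπval, hDx4, hDx1]
    simp
  -- values of J
  have hJx : J x = A x := by rw [hJval, hπx, hx, hxx]; simp
  have hJAx : J (A x) = -x := by rw [hJval, hπAx, hAxAx, hx]; simp
  have hJD : ∀ p : D, J (p : V) = (j₀ p : V) := by
    intro p
    rw [hJval, hπD, hDx4, hDx1]
    simp
  -- pairing of a D element against a general vector only sees the π component
  have h1 : ∀ p : D, ∀ v : V, Ω (p : V) v = Ω (p : V) ((π v : V)) := by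
    intro p v
    nth_rewrite 1 [hdecomp v]
    simp only [map_add, map_smul, hDx3, hDx4, smul_eq_mul]
    ring
  have h2 : ∀ p : D, ∀ v : V, Ω v (p : V) = Ω ((π v : V)) (p : V) := by
    intro p v
    nth_rewrite 1 [hdecomp v]
    simp only [map_add, map_smul, LinearMap.add_apply, LinearMap.smul_apply,
      hDx1, hDx2, smul_eq_mul]
    ring
  -- basic components of J v
  have hΩxJ : ∀ v : V, Ω x (J v) = Ω v (A x) := by
    intro v
    rw [hJval]
    simp only [map_add, map_sub, map_smul, hx, hxx, hDx1, smul_eq_mul]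
    ring
  have hΩAxJ : ∀ v : V, Ω (A x) (J v) = Ω x v := by
    intro v
    rw [hJval]
    simp only [map_add, map_sub, map_smul, hAxx, hAxAx, hDx2, smul_eq_mul]
    ring
  have hΩJAx : ∀ v : V, Ω (J v) (A x) = -Ω x v := by
    intro v; rw [hskew, hΩAxJ]
  have hπJ : ∀ v : V, π (J v) = j₀ (π v) := by
    intro v
    apply Subtype.ext
    rw [hπval, hΩJAx, hΩxJ, hJval]
    module
  -- the four defining properties of J
  have hJsq : ∀ v : V, J (J v) = -v := by
    intro v
    rw [hJval (J v), hπJ, hj₀sq, hΩJAx, hΩxJ]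
    nth_rewrite 4 [hdecomp v]
    push_cast
    module
  have hJcompat : ∀ u v : V, Ω (J u) v + Ω u (J v) = 0 := by
    intro u v
    have e1 : Ω (J u) v =
        Ω u (A x) * Ω (A x) v - Ω x u * Ω x v + Ω ((j₀ (π u) : V)) ((π v : V)) := by
      rw [hJval u]
      simp only [map_add, map_sub, LinearMap.add_apply, LinearMap.sub_apply,
        map_smul, LinearMap.smul_apply, smul_eq_mul]
      rw [h1 (j₀ (π u)) v]
      try ring
    have e2 : Ω u (J v) =
        Ω v (A x) * Ω u (A x) - Ω x v * Ω u x + Ω ((π u : V)) ((j₀ (π v) : V)) := by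
      rw [hJval v]
      simp only [map_add, map_sub, map_smul, smul_eq_mul]
      rw [h2 (j₀ (π v)) u]
      try ring
    have e3 : Ω (A x) v = - Ω v (A x) := hskew _ _
    have e4 : Ω u x = - Ω x u := hskew _ _
    have e5 := hj₀sp (π u) (π v)
    rw [e1, e2, e3, e4]
    linarith
  have hJpos : ∀ u : V, u ≠ 0 → 0 < Ω u (J u) := by
    intro u hu
    have e : Ω u (J u) =
        Ω u (A x) * Ω u (A x) + Ω x u * Ω x u + Ω ((π u : V)) ((j₀ (π u) : V)) := by
      rw [hJval u]
      simp only [map_add, map_sub, map_smul, smul_eq_mul]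
      rw [h2 (j₀ (π u)) u, hskew u x]
      ring
    rw [e]
    by_cases hπu : π u = 0
    · have hne : Ω u (A x) ≠ 0 ∨ Ω x u ≠ 0 := by
        by_contra hcon
        push_neg at hcon
        apply hu
        rw [hdecomp u, hcon.1, hcon.2, hπu]
        simp
      have hz : Ω ((π u : V)) ((j₀ (π u) : V)) = 0 := by
        rw [hπu]; simp
      rw [hz]
      rcases hne with h | h
      · have hp := mul_self_pos.mpr h
        nlinarith [mul_self_nonneg (Ω x u)]
      · have hp := mul_self_pos.mpr h
        nlinarith [mul_self_nonneg (Ω u (A x))]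
    · have hp := hj₀pos (π u) hπu
      nlinarith [mul_self_nonneg (Ω x u), mul_self_nonneg (Ω u (A x))]
  have hJDD : ∀ v ∈ D, J v ∈ D := by
    intro v hv
    rw [hJD ⟨v, hv⟩]
    exact (j₀ ⟨v, hv⟩).2
  constructor
  · refine ⟨J, ⟨hJcompat, hJsq, hJpos, hJx, hJDD, hJD⟩, ?_⟩
    intro J' ⟨hc', hsq', hpos', hx', hdd', hres'⟩
    have hAx' : J' (A x) = -x := by
      rw [← hx', hsq']
    ext v
    rw [hJval v]
    nth_rewrite 1 [hdecomp v]
    rw [map_add, map_add, map_smul, map_smul, hx', hAx', hres' (π v)]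
    simp only [smul_neg]
    abel
  · intro J' ⟨hc', hsq', hpos', hx', hdd', hres'⟩
    rw [← hx', hsq']
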